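/- arXiv:2112.04398 — 2 statements merged into one kernel-verified Lean document; each statement's English description precedes it below -/
import Mathlib

section
/- Let X_1,…,X_J ⊂ ℝ be compact intervals, μ_j Borel probability measures on X_j, c infinitely differentiable on X_1 × ⋯ × X_J, and ε > 0. Suppose the bounded measurable potentials φ_1,…,φ_J satisfy, for every j and every x_j ∈ X_j, exp(−φ_j(x_j)/ε) = ∫ exp((Σ_{i≠j} φ_i(x_i) − c(x))/ε) d(⊗_{i≠j} μ_i)(x_{−j}). Then each φ_j is infinitely differentiable and satisfies the identity φ_j'(x_j) = ∫ exp((Σ_{i=1}^J φ_i(x_i) − c(x))/ε) · (∂c/∂x_j)(x) d(⊗_{i≠j} μ_i)(x_{−j}) for every x_j ∈ X_j. -/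
open MeasureTheory

/-- Glue a value `xj` in coordinate `j` together with values `y` of the remaining
coordinates into a full vector of `ℝ^J`. -/
def glue {J : ℕ} (j : Fin J) (xj : ℝ) (y : {i : Fin J // i ≠ j} → ℝ) (i : Fin J) : ℝ :=
  if h : i = j then xj else y ⟨i, h⟩

namespace SchrodingerAux

variable {J : ℕ}

lemma glue_update (j : Fin J) (x t : ℝ) (y : {i : Fin J // i ≠ j} → ℝ) :
    Function.update (glue j x y) j t = glue j t y := by
  funext i
  rcases eq_or_ne i j with h | h
  · subst h; simp [glue]
  · simp [glue, h, Function.update_apply]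

lemma measurable_glue (j : Fin J) (x : ℝ) : Measurable (glue j x) := by
  apply measurable_pi_lambda
  intro i
  by_cases h : i = j
  · subst h
    simp only [glue, dif_pos]
    exact measurable_const
  · simp only [glue, h, dif_neg, not_false_iff]
    exact measurable_pi_apply _

lemma hasDerivAt_glue (j : Fin J) (y : {i : Fin J // i ≠ j} → ℝ) (x : ℝ) :
    HasDerivAt (fun t => glue j t y) (Pi.single j 1) x := by
  rw [hasDerivAt_pi]
  intro i
  by_cases h : i = j
  · subst h
    have h1 : (fun t => glue i t y i) = fun t => t := by
      funext t; simp [glue]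
    rw [h1, Pi.single_eq_same]
    exact hasDerivAt_id x
  · have h1 : (fun t => glue j t y i) = fun _ => y ⟨i, h⟩ := by
      funext t; simp [glue, h]
    rw [h1, Pi.single_eq_of_ne h]
    exact hasDerivAt_const x _

lemma hasDerivAt_comp_glue (j : Fin J) (y : {i : Fin J // i ≠ j} → ℝ) (x : ℝ)
    {g : (Fin J → ℝ) → ℝ} (hg : DifferentiableAt ℝ g (glue j x y)) :
    HasDerivAt (fun t => g (glue j t y)) (fderiv ℝ g (glue j x y) (Pi.single j 1)) x :=
  hg.hasFDerivAt.comp_hasDerivAt x (hasDerivAt_glue j y x)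

lemma ae_box (j : Fin J) (a b : Fin J → ℝ) (μ : Fin J → Measure ℝ)
    [∀ i, IsProbabilityMeasure (μ i)]
    (hsupp : ∀ i, μ i (Set.Icc (a i) (b i)) = 1) :
    ∀ᵐ y ∂(Measure.pi fun i : {i : Fin J // i ≠ j} => μ i.1),
      ∀ i : {i : Fin J // i ≠ j}, y i ∈ Set.Icc (a i.1) (b i.1) := by
  set ν := Measure.pi fun i : {i : Fin J // i ≠ j} => μ i.1 with hν
  set s := Set.pi Set.univ fun i : {i : Fin J // i ≠ j} => Set.Icc (a i.1) (b i.1) with hs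
  have hmeas : MeasurableSet s := MeasurableSet.univ_pi fun i => measurableSet_Icc
  have h1 : ν s = 1 := by
    rw [hν, hs, Measure.pi_pi]
    simp [hsupp]
  have h0 : ν sᶜ = 0 := by
    rw [measure_compl hmeas (measure_ne_top _ _), h1, measure_univ]
    simp
  have hae : ∀ᵐ y ∂ν, y ∈ s := mem_ae_iff.2 h0
  filter_upwards [hae] with y hy
  exact fun i => Set.mem_univ_pi.1 hy i

lemma mem_box (j : Fin J) (a b : Fin J → ℝ) (x₀ : ℝ)
    {x : ℝ} (hx : x ∈ Set.Icc (x₀ - 1) (x₀ + 1))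
    {y : {i : Fin J // i ≠ j} → ℝ} (hy : ∀ i : {i : Fin J // i ≠ j}, y i ∈ Set.Icc (a i.1) (b i.1)) :
    glue j x y ∈ Set.Icc (fun i => min (a i) (x₀ - 1)) (fun i => max (b i) (x₀ + 1)) := by
  rw [Set.mem_Icc]
  constructor
  · intro i
    by_cases h : i = j
    · subst h
      simp only [glue, dif_pos]
      exact le_trans (min_le_right _ _) hx.1
    · have h1 := (hy ⟨i, h⟩).1
      simp only [glue, dif_neg h]
      exact le_trans (min_le_left _ _) h1
  · intro i
    by_cases h : i = j
    · subst h
      simp only [glue, dif_pos]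
      exact le_trans hx.2 (le_max_right _ _)
    · have h1 := (hy ⟨i, h⟩).2
      simp only [glue, dif_neg h]
      exact le_trans h1 (le_max_left _ _)

variable (j : Fin J) (a b : Fin J → ℝ) (μ : Fin J → Measure ℝ)
  [∀ i, IsProbabilityMeasure (μ i)]
  (w : ({i : Fin J // i ≠ j} → ℝ) → ℝ) (B : ℝ)

lemma master_integrable (hsupp : ∀ i, μ i (Set.Icc (a i) (b i)) = 1)
    (hw : Measurable w) (hwB : ∀ y, |w y| ≤ B)
    {g : (Fin J → ℝ) → ℝ} (hg : Continuous g) (x : ℝ) :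
    Integrable (fun y => w y * g (glue j x y))
      (Measure.pi fun i : {i : Fin J // i ≠ j} => μ i.1) := by
  have hB : 0 ≤ B := le_trans (abs_nonneg _) (hwB fun _ => 0)
  obtain ⟨C, hC⟩ := (isCompact_Icc (a := fun i => min (a i) (x - 1))
    (b := fun i => max (b i) (x + 1))).exists_bound_of_continuousOn hg.continuousOn
  refine Integrable.mono' (integrable_const (B * C)) ?_ ?_
  · exact (hw.mul (hg.measurable.comp (measurable_glue j x))).aestronglyMeasurable
  · filter_upwards [ae_box j a b μ hsupp] with y hy
    have hz := mem_box j a b x (x := x) ⟨by linarith, by linarith⟩ hy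
    rw [Real.norm_eq_abs, abs_mul]
    exact mul_le_mul (hwB y) (by simpa [Real.norm_eq_abs] using hC _ hz) (abs_nonneg _) hB

lemma master_hasDerivAt (hsupp : ∀ i, μ i (Set.Icc (a i) (b i)) = 1)
    (hw : Measurable w) (hwB : ∀ y, |w y| ≤ B)
    {g : (Fin J → ℝ) → ℝ} (hg : ContDiff ℝ (↑(⊤ : ℕ∞)) g) (x₀ : ℝ) :
    HasDerivAt (fun x => ∫ y, w y * g (glue j x y)
        ∂(Measure.pi fun i : {i : Fin J // i ≠ j} => μ i.1))
      (∫ y, w y * fderiv ℝ g (glue j x₀ y) (Pi.single j 1)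
        ∂(Measure.pi fun i : {i : Fin J // i ≠ j} => μ i.1)) x₀ := by
  have hB : 0 ≤ B := le_trans (abs_nonneg _) (hwB fun _ => 0)
  have hone : (1 : WithTop ℕ∞) ≤ ((⊤ : ℕ∞) : WithTop ℕ∞) := by exact_mod_cast le_top
  have hcont := hg.continuous
  have hDgcont : Continuous fun z => fderiv ℝ g z (Pi.single j 1) :=
    (hg.continuous_fderiv (by simp)).clm_apply continuous_const
  obtain ⟨C, hC⟩ := (isCompact_Icc (a := fun i => min (a i) (x₀ - 1))
    (b := fun i => max (b i) (x₀ + 1))).exists_bound_of_continuousOn hDgcont.continuousOn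
  refine (hasDerivAt_integral_of_dominated_loc_of_deriv_le (𝕜 := ℝ)
    (μ := Measure.pi fun i : {i : Fin J // i ≠ j} => μ i.1)
    (F := fun x y => w y * g (glue j x y))
    (F' := fun x y => w y * fderiv ℝ g (glue j x y) (Pi.single j 1))
    (bound := fun _ => B * C) (s := Metric.ball x₀ 1) (Metric.ball_mem_nhds x₀ one_pos) ?_ ?_ ?_ ?_ ?_ ?_).2
  · exact Filter.Eventually.of_forall fun x =>
      (hw.mul (hcont.measurable.comp (measurable_glue j x))).aestronglyMeasurable
  · exact master_integrable j a b μ w B hsupp hw hwB hcont x₀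
  · exact (hw.mul (hDgcont.measurable.comp (measurable_glue j x₀))).aestronglyMeasurable
  · filter_upwards [ae_box j a b μ hsupp] with y hy
    intro x hx
    rw [Metric.mem_ball, Real.dist_eq] at hx
    have hxI : x ∈ Set.Icc (x₀ - 1) (x₀ + 1) := by
      rw [abs_sub_lt_iff] at hx
      constructor <;> [linarith [hx.1]; linarith [hx.2]]
    have hz := mem_box j a b x₀ hxI hy
    rw [Real.norm_eq_abs, abs_mul]
    exact mul_le_mul (hwB y) (by simpa [Real.norm_eq_abs] using hC _ hz) (abs_nonneg _) hB
  · exact integrable_const _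
  · refine Filter.Eventually.of_forall fun y => fun x _ => ?_
    exact (hasDerivAt_comp_glue j y x ((hg.differentiable (by simp)) _)).const_mul (w y)

lemma master_smooth (hsupp : ∀ i, μ i (Set.Icc (a i) (b i)) = 1)
    (hw : Measurable w) (hwB : ∀ y, |w y| ≤ B) :
    ∀ (n : ℕ) (g : (Fin J → ℝ) → ℝ), ContDiff ℝ (↑(⊤ : ℕ∞)) g →
      ContDiff ℝ (n : WithTop ℕ∞) (fun x => ∫ y, w y * g (glue j x y)
        ∂(Measure.pi fun i : {i : Fin J // i ≠ j} => μ i.1)) := by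
  intro n
  induction n with
  | zero =>
    intro g hg
    rw [Nat.cast_zero, contDiff_zero]
    exact Differentiable.continuous
      (fun x => (master_hasDerivAt j a b μ w B hsupp hw hwB hg x).differentiableAt)
  | succ n ih =>
    intro g hg
    have htop : ((⊤ : ℕ∞) : WithTop ℕ∞) + 1 ≤ ((⊤ : ℕ∞) : WithTop ℕ∞) := by
      exact_mod_cast le_top
    have hg' : ContDiff ℝ (↑(⊤ : ℕ∞)) (fun z => fderiv ℝ g z (Pi.single j 1)) :=
      (hg.fderiv_right htop).clm_apply contDiff_const
    have hder : (deriv fun x => ∫ y, w y * g (glue j x y)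
          ∂(Measure.pi fun i : {i : Fin J // i ≠ j} => μ i.1)) =
        fun x => ∫ y, w y * fderiv ℝ g (glue j x y) (Pi.single j 1)
          ∂(Measure.pi fun i : {i : Fin J // i ≠ j} => μ i.1) :=
      funext fun x => (master_hasDerivAt j a b μ w B hsupp hw hwB hg x).deriv
    rw [show ((n + 1 : ℕ) : WithTop ℕ∞) = (n : WithTop ℕ∞) + 1 by push_cast; ring]
    refine contDiff_succ_iff_deriv.2
      ⟨fun x => (master_hasDerivAt j a b μ w B hsupp hw hwB hg x).differentiableAt, ?_, ?_⟩
    · intro h; exact absurd h (by simp)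
    · rw [hder]; exact ih _ hg'

lemma master_smooth_top (hsupp : ∀ i, μ i (Set.Icc (a i) (b i)) = 1)
    (hw : Measurable w) (hwB : ∀ y, |w y| ≤ B)
    {g : (Fin J → ℝ) → ℝ} (hg : ContDiff ℝ (↑(⊤ : ℕ∞)) g) :
    ContDiff ℝ (↑(⊤ : ℕ∞)) (fun x => ∫ y, w y * g (glue j x y)
      ∂(Measure.pi fun i : {i : Fin J // i ≠ j} => μ i.1)) :=
  contDiff_infty.2 fun n => master_smooth j a b μ w B hsupp hw hwB n g hg

end SchrodingerAux

open SchrodingerAux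

/-- If bounded measurable potentials `φ_1,…,φ_J` on compact intervals
satisfy the Schrödinger system
`exp(-φ_j(x_j)/ε) = ∫ exp((∑_{i≠j} φ_i(x_i) - c(x))/ε) d(⊗_{i≠j}μ_i)`,
then each `φ_j` is infinitely differentiable on its interval, with derivative
`φ_j'(x_j) = ∫ exp((∑_i φ_i(x_i) - c(x))/ε) · ∂c/∂x_j(x) d(⊗_{i≠j}μ_i)`. -/
theorem schrodinger_potentials_smooth_with_deriv
    {J : ℕ} (hJ : 2 ≤ J)
    (a b : Fin J → ℝ) (hab : ∀ j, a j < b j)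
    (μ : Fin J → Measure ℝ) [∀ j, IsProbabilityMeasure (μ j)]
    (hsupp : ∀ j, μ j (Set.Icc (a j) (b j)) = 1)
    (c : (Fin J → ℝ) → ℝ) (hc : ContDiff ℝ (⊤ : ℕ∞) c)
    (ε : ℝ) (hε : 0 < ε)
    (φ : Fin J → ℝ → ℝ)
    (hφ_meas : ∀ j, Measurable (φ j))
    (hφ_bdd : ∀ j, ∃ M, ∀ x, |φ j x| ≤ M)
    (hSch : ∀ j, ∀ xj ∈ Set.Icc (a j) (b j),
      Real.exp (-φ j xj / ε) =
        ∫ y, Real.exp (((∑ i : {i : Fin J // i ≠ j}, φ i.1 (y i)) - c (glue j xj y)) / ε)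
          ∂(Measure.pi fun i : {i : Fin J // i ≠ j} => μ i.1)) :
    ∀ j, ContDiffOn ℝ (⊤ : ℕ∞) (φ j) (Set.Icc (a j) (b j)) ∧
      ∀ xj ∈ Set.Icc (a j) (b j),
        HasDerivWithinAt (φ j)
          (∫ y, Real.exp (((∑ i, φ i (glue j xj y i)) - c (glue j xj y)) / ε) *
              deriv (fun t => c (Function.update (glue j xj y) j t)) xj
            ∂(Measure.pi fun i : {i : Fin J // i ≠ j} => μ i.1))
          (Set.Icc (a j) (b j)) xj := by
  intro j
  have hone : (1 : WithTop ℕ∞) ≤ ((⊤ : ℕ∞) : WithTop ℕ∞) := by exact_mod_cast le_top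
  have hc_diff : Differentiable ℝ c := hc.differentiable (by simp)
  choose M hM using hφ_bdd
  set ν := Measure.pi fun i : {i : Fin J // i ≠ j} => μ i.1 with hν
  set S : ({i : Fin J // i ≠ j} → ℝ) → ℝ := fun y => ∑ i : {i : Fin J // i ≠ j}, φ i.1 (y i)
    with hSdef
  set w : ({i : Fin J // i ≠ j} → ℝ) → ℝ := fun y => Real.exp (S y / ε) with hwdef
  have hSmeas : Measurable S :=
    Finset.measurable_sum _ fun i _ => (hφ_meas i.1).comp (measurable_pi_apply i)
  have hw : Measurable w := Real.measurable_exp.comp (hSmeas.div_const ε)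
  set B := Real.exp ((∑ i : {i : Fin J // i ≠ j}, M i.1) / ε) with hBdef
  have hwB : ∀ y, |w y| ≤ B := by
    intro y
    rw [hwdef, hBdef, abs_of_pos (Real.exp_pos _), Real.exp_le_exp]
    apply div_le_div_of_nonneg_right ?_ hε.le
    exact Finset.sum_le_sum fun i _ => (abs_le.1 (hM i.1 (y i))).2
  set g₀ : (Fin J → ℝ) → ℝ := fun z => Real.exp (-c z / ε) with hg₀def
  have hg₀ : ContDiff ℝ (↑(⊤ : ℕ∞)) g₀ := Real.contDiff_exp.comp (hc.neg.div_const ε)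
  set F : ℝ → ℝ := fun x => ∫ y, w y * g₀ (glue j x y) ∂ν with hFdef
  have h_eqF : ∀ x, (∫ y, Real.exp ((S y - c (glue j x y)) / ε) ∂ν) = F x := by
    intro x
    refine integral_congr_ae (Filter.Eventually.of_forall fun y => ?_)
    show Real.exp ((S y - c (glue j x y)) / ε) = w y * g₀ (glue j x y)
    rw [hwdef, hg₀def,
      show (S y - c (glue j x y)) / ε = S y / ε + -c (glue j x y) / ε by ring, Real.exp_add]
  have hSch' : ∀ x ∈ Set.Icc (a j) (b j), Real.exp (-φ j x / ε) = F x :=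
    fun x hx => (hSch j x hx).trans (h_eqF x)
  have hFpos : ∀ x ∈ Set.Icc (a j) (b j), 0 < F x := fun x hx =>
    (hSch' x hx) ▸ Real.exp_pos _
  have hF_smooth : ContDiff ℝ (↑(⊤ : ℕ∞)) F :=
    master_smooth_top j a b μ w B hsupp hw hwB hg₀
  have hF_deriv : ∀ x, HasDerivAt F
      (∫ y, w y * fderiv ℝ g₀ (glue j x y) (Pi.single j 1) ∂ν) x :=
    fun x => master_hasDerivAt j a b μ w B hsupp hw hwB hg₀ x
  -- the pointwise fderiv formula for g₀
  have hDg₀ : ∀ z, fderiv ℝ g₀ z (Pi.single j 1) =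
      g₀ z * (-(fderiv ℝ c z (Pi.single j 1)) / ε) := by
    intro z
    have hfun : (fun z => -c z / ε) = fun z => (-ε⁻¹) * c z := by
      funext z; ring
    have h1 : HasFDerivAt (fun z => -c z / ε) ((-ε⁻¹ : ℝ) • fderiv ℝ c z) z := by
      rw [hfun]
      exact (hc_diff z).hasFDerivAt.const_mul _
    have h2 := h1.exp
    have h3 : fderiv ℝ g₀ z = Real.exp (-c z / ε) • ((-ε⁻¹ : ℝ) • fderiv ℝ c z) := by
      rw [hg₀def]
      exact h2.fderiv
    rw [h3]
    simp only [ContinuousLinearMap.smul_apply, smul_eq_mul, hg₀def]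
    ring
  -- the deriv-update identity
  have hupdate : ∀ (x : ℝ) (y : {i : Fin J // i ≠ j} → ℝ),
      deriv (fun t => c (Function.update (glue j x y) j t)) x =
        fderiv ℝ c (glue j x y) (Pi.single j 1) := by
    intro x y
    have h1 : (fun t => c (Function.update (glue j x y) j t)) = fun t => c (glue j t y) := by
      funext t; rw [glue_update]
    rw [h1]
    exact (hasDerivAt_comp_glue j y x (hc_diff _)).deriv
  -- sum splitting
  have hsum : ∀ (x : ℝ) (y : {i : Fin J // i ≠ j} → ℝ),
      (∑ i, φ i (glue j x y i)) = φ j x + S y := by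
    intro x y
    rw [Fintype.sum_eq_add_sum_compl j]
    congr 1
    · simp [glue]
    rw [Finset.sum_subtype (p := fun i => i ≠ j) ({j}ᶜ : Finset (Fin J))
      (fun i => by simp) (fun i => φ i (glue j x y i))]
    exact Finset.sum_congr rfl fun i _ => by simp [glue, i.2]
  -- φ j agrees with a smooth function on the interval
  have φ_eq : ∀ x ∈ Set.Icc (a j) (b j), φ j x = -(ε * Real.log (F x)) := by
    intro x hx
    have hlog : Real.log (F x) = -φ j x / ε := by
      rw [← hSch' x hx, Real.log_exp]
    rw [hlog]
    field_simp
  constructor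
  · -- smoothness
    have hg : ContDiffOn ℝ (↑(⊤ : ℕ∞)) (fun x => -(ε * Real.log (F x)))
        (Set.Icc (a j) (b j)) := by
      intro x hx
      have hlog : ContDiffAt ℝ (↑(⊤ : ℕ∞)) (fun x => Real.log (F x)) x :=
        (Real.contDiffAt_log.2 (hFpos x hx).ne').comp x hF_smooth.contDiffAt
      exact ((contDiffAt_const.mul hlog).neg).contDiffWithinAt
    exact hg.congr φ_eq
  · -- the derivative identity
    intro x hx
    have hne := (hFpos x hx).ne'
    have hF' := hF_deriv x
    have hgd : HasDerivAt (fun t => -(ε * Real.log (F t)))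
        (-(ε * ((∫ y, w y * fderiv ℝ g₀ (glue j x y) (Pi.single j 1) ∂ν) / F x))) x :=
      ((hF'.log hne).const_mul ε).neg
    set A := ∫ y, w y * (g₀ (glue j x y) * fderiv ℝ c (glue j x y) (Pi.single j 1)) ∂ν with hA
    have hD₀ : (∫ y, w y * fderiv ℝ g₀ (glue j x y) (Pi.single j 1) ∂ν) = -ε⁻¹ * A := by
      rw [hA, ← integral_const_mul]
      refine integral_congr_ae (Filter.Eventually.of_forall fun y => ?_)
      beta_reduce
      rw [hDg₀]
      ring
    have hLHS : (∫ y, Real.exp (((∑ i, φ i (glue j x y i)) - c (glue j x y)) / ε) *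
          deriv (fun t => c (Function.update (glue j x y) j t)) x ∂ν) =
        Real.exp (φ j x / ε) * A := by
      rw [hA, ← integral_const_mul]
      refine integral_congr_ae (Filter.Eventually.of_forall fun y => ?_)
      beta_reduce
      rw [hupdate x y, hsum x y]
      show Real.exp ((φ j x + S y - c (glue j x y)) / ε) * fderiv ℝ c (glue j x y) (Pi.single j 1)
        = Real.exp (φ j x / ε) * (w y * (g₀ (glue j x y) * fderiv ℝ c (glue j x y) (Pi.single j 1)))
      rw [hwdef, hg₀def,
        show (φ j x + S y - c (glue j x y)) / ε
          = φ j x / ε + (S y / ε + -c (glue j x y) / ε) by ring,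
        Real.exp_add, Real.exp_add]
      ring
    have hFx : F x = (Real.exp (φ j x / ε))⁻¹ := by
      rw [← hSch' x hx, show -φ j x / ε = -(φ j x / ε) by ring, Real.exp_neg]
    have key : (∫ y, Real.exp (((∑ i, φ i (glue j x y i)) - c (glue j x y)) / ε) *
          deriv (fun t => c (Function.update (glue j x y) j t)) x ∂ν) =
        -(ε * ((∫ y, w y * fderiv ℝ g₀ (glue j x y) (Pi.single j 1) ∂ν) / F x)) := by
      rw [hLHS, hD₀, hFx]
      field_simp
    rw [key]
    exact (hgd.hasDerivWithinAt).congr φ_eq (φ_eq x hx)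
end

section
/- Let X_1,…,X_J ⊂ ℝ be compact intervals, μ_j Borel probability measures on X_j, c infinitely differentiable on X_1 × ⋯ × X_J with all partial derivatives bounded in sup-norm by a constant C, and let 0 < ε ≤ 1. Suppose the bounded measurable potentials φ_1,…,φ_J satisfy the Schrödinger system exp(−φ_j(x_j)/ε) = ∫ exp((Σ_{i≠j} φ_i(x_i) − c(x))/ε) d(⊗_{i≠j} μ_i)(x_{−j}) for every j and x_j, and suppose moreover ‖φ_j‖_∞ ≤ B for all j and sup_x exp((Σ_j φ_j(x_j) − c(x))/ε) ≤ Λ. Then each φ_j is infinitely differentiable, and for every integer k ≥ 1 there exists a constant C_k, depending only on k, J, C, B, and Λ (but not on ε), such that ‖φ_j^{(k)}‖_∞ ≤ C_k (1 + ε^{1−k}). -/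
open MeasureTheory

namespace SchrodAux






/-- Formal derivative of a product term `∏ d_i, i ∈ l` where `d_i' = d_{i+1}`. -/
def bumpList : List ℕ → Multiset (List ℕ)
  | [] => 0
  | i :: t => ((i+1) :: t) ::ₘ (bumpList t).map (i :: ·)

/-- Symbolic `n`-th derivative of `exp(u)` divided by `exp(u)`, as a sum of products of
`d_i` where `d_i` is the `i`-th derivative of `u_x` (so `d_i' = d_{i+1}`). -/
def Qsym : ℕ → Multiset (List ℕ)
  | 0 => {[]}
  | n+1 => (Qsym n).bind bumpList + (Qsym n).map (0 :: ·)

def evalL (d : ℕ → ℝ) (l : List ℕ) : ℝ := (l.map d).prod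

def evalM (d : ℕ → ℝ) (m : Multiset (List ℕ)) : ℝ := (m.map (evalL d)).sum

/-- Formal derivative of a signed product term of `R_i`'s, where `R_i' = R_{i+1} - R_1 R_i`. -/
def bumpRL (s : Bool) : List ℕ → Multiset (Bool × List ℕ)
  | [] => 0
  | i :: t => (s, (i+1) :: t) ::ₘ (!s, 1 :: i :: t) ::ₘ (bumpRL s t).map (fun p => (p.1, i :: p.2))

/-- Symbolic `m`-th derivative of `R_1 = F'/F`. -/
def Lsym : ℕ → Multiset (Bool × List ℕ)
  | 0 => {(false, [1])}
  | m+1 => (Lsym m).bind fun p => bumpRL p.1 p.2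

def evalS (d : ℕ → ℝ) (p : Bool × List ℕ) : ℝ := (cond p.1 (-1) 1) * evalL d p.2

def evalMS (d : ℕ → ℝ) (m : Multiset (Bool × List ℕ)) : ℝ := (m.map (evalS d)).sum

@[simp] lemma evalL_nil (d : ℕ → ℝ) : evalL d [] = 1 := rfl

@[simp] lemma evalL_cons (d : ℕ → ℝ) (i : ℕ) (t : List ℕ) :
    evalL d (i :: t) = d i * evalL d t := by simp [evalL]

@[simp] lemma evalM_zero (d : ℕ → ℝ) : evalM d 0 = 0 := rfl

@[simp] lemma evalM_cons (d : ℕ → ℝ) (l : List ℕ) (m : Multiset (List ℕ)) :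
    evalM d (l ::ₘ m) = evalL d l + evalM d m := by simp [evalM]

@[simp] lemma evalM_add (d : ℕ → ℝ) (m₁ m₂ : Multiset (List ℕ)) :
    evalM d (m₁ + m₂) = evalM d m₁ + evalM d m₂ := by simp [evalM]

@[simp] lemma evalM_singleton (d : ℕ → ℝ) (l : List ℕ) :
    evalM d {l} = evalL d l := by simp [evalM]

lemma evalM_map_cons (d : ℕ → ℝ) (i : ℕ) (m : Multiset (List ℕ)) :
    evalM d (m.map (i :: ·)) = d i * evalM d m := by
  induction m using Multiset.induction_on with
  | empty => simp
  | cons l m ih => simp [ih]; ring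

@[simp] lemma evalMS_zero (d : ℕ → ℝ) : evalMS d 0 = 0 := rfl

@[simp] lemma evalMS_cons (d : ℕ → ℝ) (p : Bool × List ℕ) (m : Multiset (Bool × List ℕ)) :
    evalMS d (p ::ₘ m) = evalS d p + evalMS d m := by simp [evalMS]

lemma evalMS_map_cons (d : ℕ → ℝ) (i : ℕ) (m : Multiset (Bool × List ℕ)) :
    evalMS d (m.map (fun p => (p.1, i :: p.2))) = d i * evalMS d m := by
  induction m using Multiset.induction_on with
  | empty => simp
  | cons p m ih => cases p with
    | mk s l => cases s <;> simp [ih, evalS] <;> ring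

/-- Sum over a multiset of functions each having a derivative. -/
lemma hasDerivAt_msum {ι : Type*} (m : Multiset ι) (f : ι → ℝ → ℝ) (f' : ι → ℝ) (x : ℝ)
    (h : ∀ i ∈ m, HasDerivAt (f i) (f' i) x) :
    HasDerivAt (fun x => (m.map (fun i => f i x)).sum) ((m.map f').sum) x := by
  induction m using Multiset.induction_on with
  | empty => simpa using hasDerivAt_const x (0:ℝ)
  | cons a m ih =>
    simp only [Multiset.map_cons, Multiset.sum_cons]
    exact (h a (Multiset.mem_cons_self a m)).add
      (ih fun i hi => h i (Multiset.mem_cons_of_mem hi))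

lemma hasDerivAt_evalL (d : ℕ → ℝ → ℝ) (x : ℝ)
    (hd : ∀ i, HasDerivAt (d i) (d (i+1) x) x) (l : List ℕ) :
    HasDerivAt (fun x => evalL (fun i => d i x) l) (evalM (fun i => d i x) (bumpList l)) x := by
  induction l with
  | nil => simpa [bumpList] using hasDerivAt_const x (1:ℝ)
  | cons i t ih =>
    have h : HasDerivAt (fun x => d i x * evalL (fun i => d i x) t) _ x := (hd i).mul ih
    simp only [bumpList, evalM_cons, evalL_cons, evalM_map_cons]
    convert h using 1

lemma hasDerivAt_evalM (d : ℕ → ℝ → ℝ) (x : ℝ)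
    (hd : ∀ i, HasDerivAt (d i) (d (i+1) x) x) (m : Multiset (List ℕ)) :
    HasDerivAt (fun x => evalM (fun i => d i x) m)
      (evalM (fun i => d i x) (m.bind bumpList)) x := by
  have := hasDerivAt_msum m (fun l x => evalL (fun i => d i x) l)
    (fun l => evalM (fun i => d i x) (bumpList l)) x
    (fun l _ => hasDerivAt_evalL d x hd l)
  simpa [evalM, Multiset.map_bind, Multiset.sum_bind] using this



-- R-part derivative
lemma hasDerivAt_evalS (R : ℕ → ℝ → ℝ) (x : ℝ)
    (hR : ∀ i, HasDerivAt (R i) (R (i+1) x - R 1 x * R i x) x) (s : Bool) (l : List ℕ) :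
    HasDerivAt (fun x => evalS (fun i => R i x) (s, l))
      (evalMS (fun i => R i x) (bumpRL s l)) x := by
  induction l generalizing s with
  | nil => simpa [bumpRL, evalS] using hasDerivAt_const x ((cond s (-1:ℝ) 1) * 1)
  | cons i t ih =>
    have hprod : HasDerivAt (fun x => R i x * evalS (fun i => R i x) (s, t))
        ((R (i+1) x - R 1 x * R i x) * evalS (fun i => R i x) (s, t)
          + R i x * evalMS (fun i => R i x) (bumpRL s t)) x := (hR i).mul (ih s)
    have heq : (fun x => evalS (fun i => R i x) (s, i :: t))
        = fun x => R i x * evalS (fun i => R i x) (s, t) := by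
      funext x; simp [evalS]; ring
    rw [heq]
    convert hprod using 1
    simp only [bumpRL, evalMS_cons, evalMS_map_cons]
    cases s <;> simp [evalS] <;> ring
lemma hasDerivAt_evalMS (R : ℕ → ℝ → ℝ) (x : ℝ)
    (hR : ∀ i, HasDerivAt (R i) (R (i+1) x - R 1 x * R i x) x) (m : Multiset (Bool × List ℕ)) :
    HasDerivAt (fun x => evalMS (fun i => R i x) m)
      (evalMS (fun i => R i x) (m.bind fun p => bumpRL p.1 p.2)) x := by
  have := hasDerivAt_msum m (fun p x => evalS (fun i => R i x) p)
    (fun p => evalMS (fun i => R i x) (bumpRL p.1 p.2)) x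
    (fun p _ => hasDerivAt_evalS R x hR p.1 p.2)
  simpa [evalMS, Multiset.map_bind, Multiset.sum_bind] using this

-- structural facts
lemma length_of_mem_bumpList {l l' : List ℕ} (h : l' ∈ bumpList l) : l'.length = l.length := by
  induction l generalizing l' with
  | nil => simp [bumpList] at h
  | cons i t ih =>
    simp only [bumpList, Multiset.mem_cons, Multiset.mem_map] at h
    rcases h with rfl | ⟨l'', hl'', rfl⟩
    · simp
    · simp [ih hl'']
lemma length_le_of_mem_Qsym {n : ℕ} {l : List ℕ} (h : l ∈ Qsym n) : l.length ≤ n := by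
  induction n generalizing l with
  | zero => simp [Qsym] at h; simp [h]
  | succ n ih =>
    simp only [Qsym, Multiset.mem_add, Multiset.mem_bind, Multiset.mem_map] at h
    rcases h with ⟨l', hl', hb⟩ | ⟨l', hl', rfl⟩
    · rw [length_of_mem_bumpList hb]; exact (ih hl').trans (Nat.le_succ n)
    · simpa using Nat.succ_le_succ (ih hl')
lemma mem_bumpRL {s : Bool} {l : List ℕ} {p : Bool × List ℕ} (h : p ∈ bumpRL s l)
    (hl : ∀ i ∈ l, 1 ≤ i) : p.2.sum = l.sum + 1 ∧ ∀ i ∈ p.2, 1 ≤ i := by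
  induction l generalizing p s with
  | nil => simp [bumpRL] at h
  | cons i t ih =>
    simp only [bumpRL, Multiset.mem_cons, Multiset.mem_map] at h
    rcases h with rfl | rfl | ⟨p', hp', rfl⟩
    · refine ⟨by simp [List.sum_cons]; ring, ?_⟩
      intro a ha
      rcases List.mem_cons.1 ha with rfl | ha
      · exact le_trans (hl i (List.mem_cons_self (a := i) (l := t))) (Nat.le_succ i)
      · exact hl a (List.mem_cons_of_mem i ha)
    · refine ⟨by simp [List.sum_cons]; ring, ?_⟩
      intro a ha
      simp only [List.mem_cons] at ha
      rcases ha with rfl | rfl | ha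
      · exact le_refl 1
      · exact hl a (List.mem_cons_self)
      · exact hl a (List.mem_cons_of_mem i ha)
    · obtain ⟨h1, h2⟩ := ih (s := s) hp' (fun a ha => hl a (List.mem_cons_of_mem i ha))
      constructor
      · simp only [List.sum_cons, h1]; ring
      · intro a ha
        rcases List.mem_cons.1 ha with rfl | ha
        · exact hl a (List.mem_cons_self)
        · exact h2 a ha

lemma mem_Lsym {m : ℕ} {p : Bool × List ℕ} (h : p ∈ Lsym m) :
    p.2.sum = m + 1 ∧ ∀ i ∈ p.2, 1 ≤ i := by
  induction m generalizing p with
  | zero => simp [Lsym] at h; subst h; simp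
  | succ m ih =>
    simp only [Lsym, Multiset.mem_bind] at h
    obtain ⟨q, hq, hb⟩ := h
    obtain ⟨h1, h2⟩ := ih hq
    obtain ⟨h1', h2'⟩ := mem_bumpRL hb h2
    exact ⟨by omega, h2'⟩

lemma length_le_sum {l : List ℕ} (h : ∀ i ∈ l, 1 ≤ i) : l.length ≤ l.sum := by
  induction l with
  | nil => simp
  | cons i t ih =>
    simp only [List.length_cons, List.sum_cons]
    have := ih (fun a ha => h a (List.mem_cons_of_mem i ha))
    have := h i (List.mem_cons_self (a := i) (l := t))
    omega

-- bounds
lemma abs_evalL_le (d : ℕ → ℝ) (g : ℕ → ℝ) (l : List ℕ) (h : ∀ i ∈ l, |d i| ≤ g i) :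
    |evalL d l| ≤ (l.map g).prod := by
  induction l with
  | nil => simp
  | cons i t ih =>
    simp only [evalL_cons, List.map_cons, List.prod_cons, abs_mul]
    have h1 := h i (List.mem_cons_self (a := i) (l := t))
    have h2 := ih (fun a ha => h a (List.mem_cons_of_mem i ha))
    exact mul_le_mul h1 h2 (abs_nonneg _) ((abs_nonneg _).trans h1)

lemma abs_msum_le {ι : Type*} (m : Multiset ι) (f : ι → ℝ) (A : ℝ) (hA : 0 ≤ A)
    (h : ∀ a ∈ m, |f a| ≤ A) : |(m.map f).sum| ≤ (m.card : ℝ) * A := by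
  induction m using Multiset.induction_on with
  | empty => simp
  | cons a m ih =>
    simp only [Multiset.map_cons, Multiset.sum_cons, Multiset.card_cons]
    calc |f a + (m.map f).sum| ≤ |f a| + |(m.map f).sum| := abs_add_le _ _
    _ ≤ A + (m.card : ℝ) * A := add_le_add (h a (Multiset.mem_cons_self a m))
        (ih fun b hb => h b (Multiset.mem_cons_of_mem hb))
    _ = ((m.card : ℝ) + 1) * A := by ring
    _ = _ := by push_cast; ring







variable {E : Type*} [NormedAddCommGroup E] [NormedSpace ℝ E]

lemma hasDerivAt_iteratedFDeriv_line (c : E → ℝ) (hc : ContDiff ℝ (⊤:ℕ∞) c)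
    (p v : E) (n : ℕ) (x : ℝ) :
    HasDerivAt (fun t : ℝ => iteratedFDeriv ℝ n c (p + t • v) (fun _ => v))
      (iteratedFDeriv ℝ (n+1) c (p + x • v) (fun _ => v)) x := by
  have hline : HasDerivAt (fun t : ℝ => p + t • v) v x := by
    simpa using ((hasDerivAt_id x).smul_const v).const_add p
  have hT : Differentiable ℝ (iteratedFDeriv ℝ n c) :=
    (hc.iteratedFDeriv_right (m := 1) (by exact_mod_cast le_top)).differentiable (by simp)
  have hTz : HasFDerivAt (iteratedFDeriv ℝ n c)
      (fderiv ℝ (iteratedFDeriv ℝ n c) (p + x • v)) (p + x • v) :=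
    (hT (p + x • v)).hasFDerivAt
  have hcomp : HasDerivAt (fun t : ℝ => iteratedFDeriv ℝ n c (p + t • v))
      (fderiv ℝ (iteratedFDeriv ℝ n c) (p + x • v) v) x :=
    hTz.comp_hasDerivAt x hline
  have happ := (ContinuousMultilinearMap.apply ℝ (fun _ : Fin n => E) ℝ
      (fun _ => v)).hasFDerivAt.comp_hasDerivAt x hcomp
  have hval : iteratedFDeriv ℝ (n+1) c (p + x • v) (fun _ => v)
      = (ContinuousMultilinearMap.apply ℝ (fun _ : Fin n => E) ℝ (fun _ => v))
          (fderiv ℝ (iteratedFDeriv ℝ n c) (p + x • v) v) := by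
    rw [iteratedFDeriv_succ_apply_left]; rfl
  rw [hval]
  exact happ

lemma hasDerivAt_line_comp (c : E → ℝ) (hc : ContDiff ℝ (⊤:ℕ∞) c) (p v : E) (x : ℝ) :
    HasDerivAt (fun t : ℝ => c (p + t • v))
      (iteratedFDeriv ℝ 1 c (p + x • v) (fun _ => v)) x := by
  have h := hasDerivAt_iteratedFDeriv_line c hc p v 0 x
  simpa [iteratedFDeriv_zero_apply] using h



lemma iteratedDerivWithin_eq_iteratedDeriv_of {f : ℝ → ℝ} {s : Set ℝ}
    (hs : UniqueDiffOn ℝ s) (hf : ContDiff ℝ (⊤:ℕ∞) f) {x : ℝ} (hx : x ∈ s) (n : ℕ) :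
    iteratedDerivWithin n f s x = iteratedDeriv n f x := by
  induction n generalizing x with
  | zero => simp
  | succ n ih =>
    rw [iteratedDerivWithin_succ, iteratedDeriv_succ]
    rw [derivWithin_congr (fun y hy => ih hy) (ih hx)]
    have hlt : (n : WithTop ℕ∞) < ((⊤:ℕ∞) : WithTop ℕ∞) := by
      exact_mod_cast (Ne.lt_top (by simp) : (n:ℕ∞) < ⊤)
    exact ((hf.differentiable_iteratedDeriv n hlt) x).hasDerivAt.hasDerivWithinAt.derivWithin
        (hs.uniqueDiffWithinAt hx)

lemma measurable_evalL {α : Type*} [MeasurableSpace α] (d : ℕ → α → ℝ)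
    (hd : ∀ i, Measurable (d i)) (l : List ℕ) :
    Measurable (fun a => evalL (fun i => d i a) l) := by
  induction l with
  | nil => simpa using measurable_const
  | cons i t ih => simp only [evalL_cons]; exact (hd i).mul ih

lemma measurable_evalM {α : Type*} [MeasurableSpace α] (d : ℕ → α → ℝ)
    (hd : ∀ i, Measurable (d i)) (m : Multiset (List ℕ)) :
    Measurable (fun a => evalM (fun i => d i a) m) := by
  induction m using Multiset.induction_on with
  | empty => simpa [evalM] using measurable_const
  | cons l m ih =>
    have := (measurable_evalL d hd l).add ih
    simp only [evalM_cons]; exact this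

lemma list_prod_pow_bound (K : ℕ → ℝ) (e : ℝ) (l : List ℕ) :
    (l.map (fun i => K i * e ^ i)).prod = (l.map K).prod * e ^ l.sum := by
  induction l with
  | nil => simp
  | cons i t ih => simp [ih, pow_add]; ring

lemma list_prod_le_pow (K : ℕ → ℝ) (Kb : ℝ) (hKb : 1 ≤ Kb) (l : List ℕ)
    (h : ∀ i ∈ l, K i ≤ Kb) (h0 : ∀ i ∈ l, 0 ≤ K i) :
    (l.map K).prod ≤ Kb ^ l.length := by
  induction l with
  | nil => simp
  | cons i t ih =>
    simp only [List.map_cons, List.prod_cons, List.length_cons, pow_succ]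
    have h1 := h i (List.mem_cons_self (a := i) (l := t))
    have h2 := ih (fun a ha => h a (List.mem_cons_of_mem i ha))
      (fun a ha => h0 a (List.mem_cons_of_mem i ha))
    have h3 : (0:ℝ) ≤ (t.map K).prod := List.prod_nonneg (by
      intro a ha
      obtain ⟨b, hb, rfl⟩ := List.mem_map.1 ha
      exact h0 b (List.mem_cons_of_mem i hb))
    calc K i * (t.map K).prod ≤ Kb * Kb ^ t.length :=
      mul_le_mul h1 h2 h3 (le_trans zero_le_one hKb)
    _ = Kb ^ t.length * Kb := by ring

lemma mem_le_sum {l : List ℕ} {i : ℕ} (h : i ∈ l) : i ≤ l.sum := by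
  induction l with
  | nil => simp at h
  | cons a t ih =>
    rcases List.mem_cons.1 h with rfl | h
    · simp
    · simp only [List.sum_cons]; exact le_add_left (ih h)


end SchrodAux

open SchrodAux in
/-- Quantitative smoothness of Schrödinger potentials: if the bounded
measurable potentials `φ_j` (with `‖φ_j‖_∞ ≤ B`, tilt bounded by `Λ`) solve the
Schrödinger system for a smooth cost `c` all of whose derivatives are bounded by `C`,
and `0 < ε ≤ 1`, then each `φ_j` is infinitely differentiable and for every `k ≥ 1`
there is a constant `Ck` depending only on `k, J, C, B, Λ` (not on `ε` or the data) with
`‖φ_j^{(k)}‖_∞ ≤ Ck (1 + ε^{1-k})`. -/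
theorem schrodinger_potentials_derivative_bounds
    (J : ℕ) (hJ : 2 ≤ J) (C B Λ : ℝ) (k : ℕ) (hk : 1 ≤ k) :
    ∃ Ck : ℝ, ∀ (a b : Fin J → ℝ), (∀ j, a j < b j) →
      ∀ (μ : Fin J → Measure ℝ), (∀ j, IsProbabilityMeasure (μ j)) →
      (∀ j, μ j (Set.Icc (a j) (b j)) = 1) →
      ∀ (c : (Fin J → ℝ) → ℝ), ContDiff ℝ (⊤ : ℕ∞) c →
      (∀ (n : ℕ) (x : Fin J → ℝ), ‖iteratedFDeriv ℝ n c x‖ ≤ C) →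
      ∀ (ε : ℝ), 0 < ε → ε ≤ 1 →
      ∀ (φ : Fin J → ℝ → ℝ), (∀ j, Measurable (φ j)) →
      (∀ j x, |φ j x| ≤ B) →
      (∀ x ∈ Set.univ.pi fun j => Set.Icc (a j) (b j),
        Real.exp (((∑ j, φ j (x j)) - c x) / ε) ≤ Λ) →
      (∀ j, ∀ xj ∈ Set.Icc (a j) (b j),
        Real.exp (-φ j xj / ε) =
          ∫ y, Real.exp (((∑ i : {i : Fin J // i ≠ j}, φ i.1 (y i)) - c (glue j xj y)) / ε)
            ∂(Measure.pi fun i : {i : Fin J // i ≠ j} => μ i.1)) →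
      (∀ j, ContDiffOn ℝ (⊤ : ℕ∞) (φ j) (Set.Icc (a j) (b j))) ∧
        ∀ j, ∀ xj ∈ Set.Icc (a j) (b j),
          |iteratedDerivWithin k (φ j) (Set.Icc (a j) (b j)) xj| ≤
            Ck * (1 + ε ^ ((1 : ℤ) - (k : ℤ))) := by
  classical
  have hJ0 : 0 < J := by omega
  set M : ℝ := max C 1 with hM
  have hM1 : 1 ≤ M := le_max_right _ _
  set Kq : ℕ → ℝ := fun n => ((Qsym n).card : ℝ) * M ^ n with hKq
  have hKq0 : ∀ n, 0 ≤ Kq n := fun n => by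
    apply mul_nonneg (Nat.cast_nonneg _) (pow_nonneg (le_trans zero_le_one hM1) n)
  set Kbig : ℝ := 1 + ∑ i ∈ Finset.range (k+1), Kq i with hKbig
  have hKbig1 : 1 ≤ Kbig := le_add_of_nonneg_right (Finset.sum_nonneg fun i _ => hKq0 i)
  have hKqle : ∀ i ≤ k, Kq i ≤ Kbig := by
    intro i hi
    rw [hKbig]
    have h1 : Kq i ≤ ∑ r ∈ Finset.range (k+1), Kq r :=
      Finset.single_le_sum (fun r _ => hKq0 r) (Finset.mem_range.2 (by omega))
    linarith
  set Ck : ℝ := ((Lsym (k-1)).card : ℝ) * Kbig ^ k with hCk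
  have hCk0 : 0 ≤ Ck :=
    mul_nonneg (Nat.cast_nonneg _) (pow_nonneg (le_trans zero_le_one hKbig1) k)
  refine ⟨Ck, ?_⟩
  intro a b hab μ hμ hμI c hc hcC ε hε hε1 φ hφm hφB hΛ hSch
  have hεne : ε ≠ 0 := ne_of_gt hε
  have hC0 : 0 ≤ C := le_trans (norm_nonneg _) (hcC 0 (fun _ => 0))
  have hB0 : 0 ≤ B := le_trans (abs_nonneg _) (hφB ⟨0, hJ0⟩ 0)
  have hcbound : ∀ z, |c z| ≤ C := fun z => by
    simpa [norm_iteratedFDeriv_zero] using hcC 0 z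
  have key : ∀ j : Fin J, ContDiffOn ℝ (⊤:ℕ∞) (φ j) (Set.Icc (a j) (b j)) ∧
      ∀ xj ∈ Set.Icc (a j) (b j), |iteratedDerivWithin k (φ j) (Set.Icc (a j) (b j)) xj|
        ≤ Ck * (1 + ε ^ ((1:ℤ) - (k:ℤ))) := by
    intro j
    haveI : ∀ i : {i : Fin J // i ≠ j}, IsProbabilityMeasure (μ i.1) := fun i => hμ i.1
    set ν : Measure ({i : Fin J // i ≠ j} → ℝ) :=
      Measure.pi fun i : {i : Fin J // i ≠ j} => μ i.1 with hν
    haveI : IsProbabilityMeasure ν := by rw [hν]; infer_instance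
    set v : Fin J → ℝ := Pi.single j 1 with hv
    have hvnorm : ‖v‖ = 1 := by rw [hv, Pi.norm_single]; simp
    set pbase : ({i : Fin J // i ≠ j} → ℝ) → (Fin J → ℝ) :=
      fun y i => if h : i = j then 0 else y ⟨i, h⟩ with hpb
    have hglue : ∀ (x : ℝ) (y : {i : Fin J // i ≠ j} → ℝ), glue j x y = pbase y + x • v := by
      intro x y
      funext i
      by_cases h : i = j
      · subst h; simp [glue, hpb, hv]
      · simp [glue, h, hpb, hv, Pi.single_eq_of_ne h]
    set S : ({i : Fin J // i ≠ j} → ℝ) → ℝ :=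
      fun y => ∑ i : {i : Fin J // i ≠ j}, φ i.1 (y i) with hSdef
    have hSmeas : Measurable S :=
      Finset.measurable_sum _ (fun i _ => (hφm i.1).comp (measurable_pi_apply i))
    have hSbound : ∀ y, |S y| ≤ J * B := by
      intro y
      calc |S y| ≤ ∑ i : {i : Fin J // i ≠ j}, |φ i.1 (y i)| := Finset.abs_sum_le_sum_abs _ _
      _ ≤ ∑ _i : {i : Fin J // i ≠ j}, B := Finset.sum_le_sum (fun i _ => hφB _ _)
      _ = (Fintype.card {i : Fin J // i ≠ j} : ℝ) * B := by
          rw [Finset.sum_const]; simp [nsmul_eq_mul]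
      _ ≤ J * B := by
          have h1 : Fintype.card {i : Fin J // i ≠ j} ≤ J := by
            simpa using Fintype.card_subtype_le (fun i : Fin J => i ≠ j)
          exact mul_le_mul_of_nonneg_right (by exact_mod_cast h1) hB0
    set u : ℝ → ({i : Fin J // i ≠ j} → ℝ) → ℝ :=
      fun x y => (S y - c (glue j x y)) / ε with hu
    set dQ : ℕ → ℝ → ({i : Fin J // i ≠ j} → ℝ) → ℝ :=
      fun i x y => (-1/ε) * iteratedFDeriv ℝ (i+1) c (glue j x y) (fun _ => v) with hdQ
    have hgluey : ∀ x : ℝ, Continuous (fun y : {i : Fin J // i ≠ j} → ℝ => glue j x y) := by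
      intro x
      apply continuous_pi
      intro i
      by_cases h : i = j
      · subst h; simpa [glue] using continuous_const
      · simpa [glue, h] using continuous_apply (⟨i, h⟩ : {i : Fin J // i ≠ j})
    have hle : ∀ m : ℕ, ((m : ℕ∞) : WithTop ℕ∞) ≤ ((⊤:ℕ∞) : WithTop ℕ∞) :=
      fun m => by exact_mod_cast (le_top : (m:ℕ∞) ≤ ⊤)
    have hdQmeas : ∀ i x, Measurable (fun y => dQ i x y) := by
      intro i x
      apply Measurable.const_mul
      exact (((ContinuousMultilinearMap.apply ℝ _ ℝ (fun _ => v)).continuous.comp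
        ((hc.continuous_iteratedFDeriv (m := i+1) (hle (i+1))).comp (hgluey x)))).measurable
    have humeas : ∀ x, Measurable (fun y => u x y) := fun x =>
      ((hSmeas.sub ((hc.continuous.comp (hgluey x)).measurable)).div_const ε)
    have hubound : ∀ x y, |u x y| ≤ (J*B + C)/ε := by
      intro x y
      rw [hu]
      rw [abs_div, abs_of_pos hε]
      gcongr
      exact (abs_sub _ _).trans (add_le_add (hSbound y) (hcbound _))
    have hdQderiv : ∀ (i : ℕ) (y : {i : Fin J // i ≠ j} → ℝ) (x : ℝ),
        HasDerivAt (fun x => dQ i x y) (dQ (i+1) x y) x := by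
      intro i y x
      have h := SchrodAux.hasDerivAt_iteratedFDeriv_line c hc (pbase y) v (i+1) x
      simp only [hdQ, hglue]
      exact HasDerivAt.const_mul (-1/ε) h
    have huderiv : ∀ (y : {i : Fin J // i ≠ j} → ℝ) (x : ℝ),
        HasDerivAt (fun x => u x y) (dQ 0 x y) x := by
      intro y x
      have h := SchrodAux.hasDerivAt_line_comp c hc (pbase y) v x
      have h2 : HasDerivAt (fun x : ℝ => (S y - c (pbase y + x • v)) / ε)
          ((-(iteratedFDeriv ℝ 1 c (pbase y + x • v) (fun _ => v))) / ε) x :=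
        (h.const_sub (S y)).div_const ε
      simp only [hu, hdQ, hglue]
      convert h2 using 1
      ring
    set W : ℕ → ℝ → ({i : Fin J // i ≠ j} → ℝ) → ℝ := fun n x y =>
      SchrodAux.evalM (fun i => dQ i x y) (Qsym n) * Real.exp (u x y) with hW
    have hWderiv : ∀ (n : ℕ) (y : {i : Fin J // i ≠ j} → ℝ) (x : ℝ),
        HasDerivAt (fun x => W n x y) (W (n+1) x y) x := by
      intro n y x
      have hQ := SchrodAux.hasDerivAt_evalM (fun i x => dQ i x y) x
        (fun i => hdQderiv i y x) (Qsym n)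
      have hE : HasDerivAt (fun x => Real.exp (u x y)) (Real.exp (u x y) * dQ 0 x y) x :=
        (huderiv y x).exp
      have hprod : HasDerivAt (fun x => SchrodAux.evalM (fun i => dQ i x y) (Qsym n) * Real.exp (u x y)) _ x := hQ.mul hE
      convert hprod using 1
      show SchrodAux.evalM (fun i => dQ i x y) (Qsym (n+1)) * Real.exp (u x y) = _
      rw [show Qsym (n+1) = (Qsym n).bind bumpList + (Qsym n).map (0 :: ·) from rfl]
      rw [SchrodAux.evalM_add, SchrodAux.evalM_map_cons]
      ring
    have hdQbound : ∀ i x y, |dQ i x y| ≤ M / ε := by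
      intro i x y
      rw [hdQ]
      rw [abs_mul]
      have h1 : |(-1/ε : ℝ)| = 1/ε := by
        rw [abs_div, abs_neg, abs_one, abs_of_pos hε]
      rw [h1]
      have h2 : |iteratedFDeriv ℝ (i+1) c (glue j x y) (fun _ => v)| ≤ C := by
        have h3 := ContinuousMultilinearMap.le_opNorm
          (iteratedFDeriv ℝ (i+1) c (glue j x y)) (fun _ => v)
        rw [Real.norm_eq_abs] at h3
        refine h3.trans ?_
        simp only [hvnorm, Finset.prod_const_one, mul_one]
        exact hcC (i+1) _
      calc 1/ε * |iteratedFDeriv ℝ (i+1) c (glue j x y) (fun _ => v)| ≤ 1/ε * C := by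
            apply mul_le_mul_of_nonneg_left h2 (by positivity)
      _ ≤ 1/ε * M := by
            apply mul_le_mul_of_nonneg_left (le_max_left _ _) (by positivity)
      _ = M / ε := by ring
    have hMe : 1 ≤ M / ε := (one_le_div hε).2 (le_trans hε1 hM1)
    have hQbound : ∀ (n : ℕ) x y,
        |SchrodAux.evalM (fun i => dQ i x y) (Qsym n)| ≤ ((Qsym n).card : ℝ) * (M/ε)^n := by
      intro n x y
      apply SchrodAux.abs_msum_le _ _ _ (pow_nonneg (by positivity) n)
      intro l hl
      calc |SchrodAux.evalL (fun i => dQ i x y) l|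
          ≤ (l.map (fun _ => M/ε)).prod :=
            SchrodAux.abs_evalL_le _ _ _ (fun i _ => hdQbound i x y)
      _ = (M/ε) ^ l.length := by
            rw [List.map_const', List.prod_replicate]
      _ ≤ (M/ε) ^ n := pow_le_pow_right₀ hMe (length_le_of_mem_Qsym hl)
    set Ebd : ℝ := Real.exp ((J*B + C)/ε) with hEbd
    have hexple : ∀ x y, Real.exp (u x y) ≤ Ebd := fun x y =>
      Real.exp_le_exp.2 ((le_abs_self _).trans (hubound x y))
    have hWbound : ∀ n x y, |W n x y| ≤ ((Qsym n).card : ℝ) * (M/ε)^n * Ebd := by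
      intro n x y
      rw [hW, abs_mul, abs_of_pos (Real.exp_pos _)]
      apply mul_le_mul (hQbound n x y) (hexple x y) (Real.exp_pos _).le
      positivity
    have hWmeas : ∀ n x, Measurable (fun y => W n x y) := fun n x =>
      ((SchrodAux.measurable_evalM (fun i y => dQ i x y) (fun i => hdQmeas i x) _).mul
        ((humeas x).exp))
    have hWint : ∀ n x, Integrable (fun y => W n x y) ν := fun n x =>
      (integrable_const (((Qsym n).card : ℝ) * (M/ε)^n * Ebd)).mono'
        ((hWmeas n x).aestronglyMeasurable)
        (Filter.Eventually.of_forall fun y => by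
          rw [Real.norm_eq_abs]; exact hWbound n x y)
    set Fn : ℕ → ℝ → ℝ := fun n x => ∫ y, W n x y ∂ν with hFn
    have hFnderiv : ∀ n x₀, HasDerivAt (Fn n) (Fn (n+1) x₀) x₀ := by
      intro n x₀
      have h := hasDerivAt_integral_of_dominated_loc_of_deriv_le
        (F := fun x y => W n x y) (F' := fun x y => W (n+1) x y)
        (bound := fun _ => ((Qsym (n+1)).card : ℝ) * (M/ε)^(n+1) * Ebd)
        Filter.univ_mem
        (Filter.Eventually.of_forall fun x => (hWmeas n x).aestronglyMeasurable)
        (hWint n x₀) ((hWmeas (n+1) x₀).aestronglyMeasurable)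
        (Filter.Eventually.of_forall fun y x _ => by
          rw [Real.norm_eq_abs]; exact hWbound (n+1) x y)
        (integrable_const _)
        (Filter.Eventually.of_forall fun y x _ => hWderiv n y x)
      exact h.2
    have hFn0 : ∀ x, Fn 0 x = ∫ y, Real.exp (u x y) ∂ν := by
      intro x
      have hw0 : (fun y => W 0 x y) = fun y => Real.exp (u x y) := by
        funext y
        show SchrodAux.evalM (fun i => dQ i x y) (Qsym 0) * Real.exp (u x y) = _
        rw [show Qsym 0 = {[]} from rfl]
        simp [SchrodAux.evalM]
      show (∫ y, W 0 x y ∂ν) = _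
      rw [hw0]
    have hexpint : ∀ x, Integrable (fun y => Real.exp (u x y)) ν := fun x =>
      (integrable_const Ebd).mono' ((humeas x).exp.aestronglyMeasurable)
        (Filter.Eventually.of_forall fun y => by
          rw [Real.norm_eq_abs, abs_of_pos (Real.exp_pos _)]; exact hexple x y)
    have hFpos : ∀ x, 0 < Fn 0 x := by
      intro x
      rw [hFn0 x]
      exact integral_exp_pos (hexpint x)
    have hderivFn : ∀ n, deriv (Fn n) = Fn (n+1) :=
      fun n => funext fun x => (hFnderiv n x).deriv
    have hFnC : ∀ (m : ℕ) (n : ℕ), ContDiff ℝ (m : ℕ) (Fn n) := by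
      intro m
      induction m with
      | zero =>
        intro n
        have hdiff : Differentiable ℝ (Fn n) := fun x => (hFnderiv n x).differentiableAt
        have hcont : Continuous (Fn n) := hdiff.continuous
        have h0 : ContDiff ℝ 0 (Fn n) := contDiff_zero.2 hcont
        simpa using h0
      | succ m ih =>
        intro n
        rw [show ((m+1 : ℕ) : WithTop ℕ∞) = (m : ℕ) + 1 by push_cast; rfl]
        refine contDiff_succ_iff_deriv.2 ⟨fun x => (hFnderiv n x).differentiableAt, ?_, ?_⟩
        · intro hcon
          exact absurd hcon (by simp)
        · rw [hderivFn n]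
          exact ih (n+1)
    have hFtop : ContDiff ℝ (⊤:ℕ∞) (Fn 0) :=
      contDiff_infty.2 (fun m => hFnC m 0)
    set ψ : ℝ → ℝ := fun x => -(ε * Real.log (Fn 0 x)) with hψ
    have hψC : ContDiff ℝ (⊤:ℕ∞) ψ :=
      (contDiff_const.mul (hFtop.log (fun x => (hFpos x).ne'))).neg
    have hEq : ∀ xj ∈ Set.Icc (a j) (b j), φ j xj = ψ xj := by
      intro xj hxj
      have h1 := hSch j xj hxj
      have h2 : Real.exp (-φ j xj / ε) = Fn 0 xj := by
        rw [hFn0]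
        exact h1
      have h3 := congrArg Real.log h2
      rw [Real.log_exp] at h3
      rw [div_eq_iff hεne] at h3
      show φ j xj = -(ε * Real.log (Fn 0 xj))
      linarith [h3]
    have hCDon : ContDiffOn ℝ (⊤:ℕ∞) (φ j) (Set.Icc (a j) (b j)) :=
      (hψC.contDiffOn).congr (fun x hx => hEq x hx)
    set R : ℕ → ℝ → ℝ := fun i x => Fn i x / Fn 0 x with hR
    have hRderiv : ∀ i x, HasDerivAt (R i) (R (i+1) x - R 1 x * R i x) x := by
      intro i x
      have h := (hFnderiv i x).div (hFnderiv 0 x) (hFpos x).ne'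
      have heq : (Fn (i+1) x * Fn 0 x - Fn i x * Fn 1 x) / Fn 0 x ^ 2
          = R (i+1) x - R 1 x * R i x := by
        rw [hR]
        field_simp [(hFpos x).ne']
      rw [heq] at h
      exact h
    have hKqeq : ∀ i, ((Qsym i).card : ℝ) * (M/ε)^i = Kq i * (1/ε)^i := by
      intro i
      have h0 : Kq i = ((Qsym i).card : ℝ) * M ^ i := rfl
      rw [h0, div_pow, one_div, inv_pow, div_eq_mul_inv]
      ring
    have hRbound : ∀ i x, |R i x| ≤ Kq i * (1/ε)^i := by
      intro i x
      rw [hR]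
      rw [abs_div, abs_of_pos (hFpos x), div_le_iff₀ (hFpos x)]
      have h1 : |Fn i x| ≤ (((Qsym i).card : ℝ) * (M/ε)^i) * Fn 0 x := by
        have habs : |Fn i x| ≤ ∫ y, |W i x y| ∂ν := by
          show |∫ y, W i x y ∂ν| ≤ _
          simpa [Real.norm_eq_abs] using
            norm_integral_le_integral_norm (μ := ν) (fun y => W i x y)
        refine habs.trans ?_
        have h2 : ∫ y, |W i x y| ∂ν ≤ ∫ y, (((Qsym i).card : ℝ) * (M/ε)^i) * Real.exp (u x y) ∂ν := by
          apply integral_mono ((hWint i x).abs) ((hexpint x).const_mul _)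
          intro y
          calc |W i x y| ≤ |SchrodAux.evalM (fun i' => dQ i' x y) (Qsym i)| * Real.exp (u x y) := by
                rw [hW, abs_mul, abs_of_pos (Real.exp_pos _)]
          _ ≤ (((Qsym i).card : ℝ) * (M/ε)^i) * Real.exp (u x y) :=
                mul_le_mul_of_nonneg_right (hQbound i x y) (Real.exp_pos _).le
        refine h2.trans ?_
        rw [integral_const_mul, hFn0]
      calc |Fn i x| ≤ (((Qsym i).card : ℝ) * (M/ε)^i) * Fn 0 x := h1
      _ = (Kq i * (1/ε)^i) * Fn 0 x := by rw [hKqeq i]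
    have hψderiv : ∀ x, HasDerivAt ψ (-(ε * R 1 x)) x := by
      intro x
      have hl : HasDerivAt (fun x => Real.log (Fn 0 x)) (Fn 1 x / Fn 0 x) x :=
        (hFnderiv 0 x).log (hFpos x).ne'
      have h2 := (hl.const_mul ε).neg
      exact h2
    have hclaim : ∀ (m : ℕ) (x : ℝ), iteratedDeriv m (deriv ψ) x
        = -(ε * SchrodAux.evalMS (fun i => R i x) (Lsym m)) := by
      intro m
      induction m with
      | zero =>
        intro x
        rw [iteratedDeriv_zero, (hψderiv x).deriv]
        congr 1
        rw [show Lsym 0 = {(false, [1])} from rfl]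
        simp [SchrodAux.evalMS, SchrodAux.evalS]
      | succ m ih =>
        intro x
        rw [iteratedDeriv_succ]
        rw [show iteratedDeriv m (deriv ψ)
          = fun x => -(ε * SchrodAux.evalMS (fun i => R i x) (Lsym m)) from funext ih]
        have hd : HasDerivAt (fun x => -(ε * SchrodAux.evalMS (fun i => R i x) (Lsym m))) _ x := ((SchrodAux.hasDerivAt_evalMS R x (fun i => hRderiv i x) (Lsym m)).const_mul ε).neg
        rw [hd.deriv]
        congr 1
    have hfinal : ∀ x, |iteratedDeriv k ψ x| ≤ Ck * ε ^ ((1:ℤ) - (k:ℤ)) := by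
      intro x
      have hkpos : k = (k-1)+1 := (Nat.succ_pred_eq_of_pos hk).symm
      have h1 : iteratedDeriv k ψ x
          = -(ε * SchrodAux.evalMS (fun i => R i x) (Lsym (k-1))) := by
        conv_lhs => rw [hkpos]
        rw [iteratedDeriv_succ']
        exact hclaim (k-1) x
      rw [h1, abs_neg, abs_mul, abs_of_pos hε]
      have h2 : |SchrodAux.evalMS (fun i => R i x) (Lsym (k-1))|
          ≤ ((Lsym (k-1)).card : ℝ) * (Kbig^k * (1/ε)^k) := by
        have hKbig0 : (0:ℝ) ≤ Kbig := le_trans zero_le_one hKbig1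
        apply SchrodAux.abs_msum_le _ _ _ (by positivity)
        intro p hp
        obtain ⟨hsum, hone⟩ := SchrodAux.mem_Lsym hp
        have hsum' : p.2.sum = k := by omega
        have habs : |SchrodAux.evalS (fun i => R i x) p|
            = |SchrodAux.evalL (fun i => R i x) p.2| := by
          rcases p with ⟨s, l⟩
          cases s <;> simp [SchrodAux.evalS, abs_mul]
        rw [habs]
        calc |SchrodAux.evalL (fun i => R i x) p.2|
            ≤ (p.2.map (fun i => Kq i * (1/ε)^i)).prod :=
              SchrodAux.abs_evalL_le _ _ _ (fun i _ => hRbound i x)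
        _ = (p.2.map Kq).prod * (1/ε)^p.2.sum := SchrodAux.list_prod_pow_bound Kq (1/ε) p.2
        _ ≤ Kbig ^ p.2.length * (1/ε)^p.2.sum := by
              apply mul_le_mul_of_nonneg_right ?_ (by positivity)
              apply SchrodAux.list_prod_le_pow Kq Kbig hKbig1 _ ?_ (fun i _ => hKq0 i)
              intro i hi
              exact hKqle i (le_trans (SchrodAux.mem_le_sum hi) (le_of_eq hsum'))
        _ ≤ Kbig ^ k * (1/ε)^k := by
              rw [hsum']
              apply mul_le_mul_of_nonneg_right ?_ (by positivity)
              exact pow_le_pow_right₀ hKbig1 (le_trans (SchrodAux.length_le_sum hone) (le_of_eq hsum'))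
      calc ε * |SchrodAux.evalMS (fun i => R i x) (Lsym (k-1))|
          ≤ ε * (((Lsym (k-1)).card : ℝ) * (Kbig^k * (1/ε)^k)) :=
            mul_le_mul_of_nonneg_left h2 hε.le
      _ = Ck * (ε * (1/ε)^k) := by rw [hCk]; ring
      _ = Ck * ε ^ ((1:ℤ) - (k:ℤ)) := by
            congr 1
            rw [zpow_sub₀ hεne, zpow_one, zpow_natCast]
            field_simp
            rw [← mul_pow, one_div, inv_mul_cancel₀ hεne, one_pow]
    refine ⟨hCDon, ?_⟩
    intro xj hxj
    have hudo : UniqueDiffOn ℝ (Set.Icc (a j) (b j)) := uniqueDiffOn_Icc (hab j)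
    rw [iteratedDerivWithin_congr (fun x hx => hEq x hx) hxj]
    rw [SchrodAux.iteratedDerivWithin_eq_iteratedDeriv_of hudo hψC hxj k]
    have hz0 : (0:ℝ) ≤ ε ^ ((1:ℤ) - (k:ℤ)) := le_of_lt (zpow_pos hε _)
    calc |iteratedDeriv k ψ xj| ≤ Ck * ε ^ ((1:ℤ) - (k:ℤ)) := hfinal xj
    _ ≤ Ck * (1 + ε ^ ((1:ℤ) - (k:ℤ))) := by
          apply mul_le_mul_of_nonneg_left ?_ hCk0
          linarith
  exact ⟨fun j => (key j).1, fun j => (key j).2⟩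
end
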